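/- Let u = (z₂, w₀) : [τ₀, ∞) → ℝ² be continuously differentiable with u′(τ) = F₁(u(τ)) for all τ ≥ τ₀, and suppose u(τ) → (0, 1) as τ → ∞. Then there exist constants C > 0 and τ₁ ≥ τ₀ such that for all τ ≥ τ₁: |z₂(τ)| ≤ C·e^{−τ} and |w₀(τ) − 1| ≤ C·(1 + τ)·e^{−τ}. (In the original time t̄ = e^τ these are the decay rates z₂ = O(t̄^{−1}) and w₀ − 1 = O(t̄^{−1} ln t̄) of Theorem 7, reflecting the degenerate stable rest point structure at M₂.) -/

import Mathlib

open Real Set Filter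

lemma le_of_hasDerivAt_nonpos {a : ℝ} {f f' : ℝ → ℝ}
    (hf : ∀ τ ∈ Ici a, HasDerivAt f (f' τ) τ)
    (h : ∀ τ ∈ Ici a, f' τ ≤ 0) :
    ∀ τ ∈ Ici a, f τ ≤ f a := by
  have anti : AntitoneOn f (Ici a) := by
    apply antitoneOn_of_deriv_nonpos (convex_Ici a)
    · exact fun x hx => (hf x hx).continuousAt.continuousWithinAt
    · exact fun x hx => (hf x (interior_subset hx)).differentiableAt.differentiableWithinAt
    · intro x hx
      rw [(hf x (interior_subset hx)).deriv]
      exact h x (interior_subset hx)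
  exact fun τ hτ => anti self_mem_Ici hτ hτ

lemma abs_le_of_sq_le_sq'' {x y : ℝ} (hy : 0 ≤ y) (h : x^2 ≤ y^2) : |x| ≤ y := by
  calc |x| = Real.sqrt (x^2) := (Real.sqrt_sq_eq_abs x).symm
  _ ≤ Real.sqrt (y^2) := Real.sqrt_le_sqrt h
  _ = y := Real.sqrt_sq hy

set_option maxHeartbeats 2000000 in
/-- Decay rates at the degenerate stable rest point `M₂ = (0,1)` of the order `n = 1`
STV ODE: solutions converging to `M₂` satisfy `z₂ = O(e^{−τ})` and
`w₀ − 1 = O((1+τ) e^{−τ})`. -/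
theorem decay_rates_at_M2 (τ₀ : ℝ) (z₂ w₀ : ℝ → ℝ)
    (hz : ∀ τ ∈ Ici τ₀, HasDerivAt z₂ (2 * z₂ τ - 3 * z₂ τ * w₀ τ) τ)
    (hw : ∀ τ ∈ Ici τ₀, HasDerivAt w₀ (-(1 / 6) * z₂ τ + w₀ τ - (w₀ τ) ^ 2) τ)
    (hlim : Tendsto (fun τ => (z₂ τ, w₀ τ)) atTop (nhds ((0 : ℝ), (1 : ℝ)))) :
    ∃ C > (0 : ℝ), ∃ τ₁ ≥ τ₀, ∀ τ ≥ τ₁,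
      |z₂ τ| ≤ C * Real.exp (-τ) ∧
      |w₀ τ - 1| ≤ C * (1 + τ) * Real.exp (-τ) := by
  set v : ℝ → ℝ := fun τ => w₀ τ - 1 with hvdef
  have hwv : ∀ τ, w₀ τ = v τ + 1 := fun τ => by simp [hvdef]
  have hv : ∀ τ ∈ Ici τ₀, HasDerivAt v (-(1/6) * z₂ τ - v τ - (v τ)^2) τ := by
    intro τ hτ
    have h := (hw τ hτ).sub_const 1
    refine h.congr_deriv ?_
    simp only [hvdef]; ring
  -- limit of v and eventual smallness
  have hvlim : Tendsto v atTop (nhds 0) := by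
    have h2 : Tendsto w₀ atTop (nhds 1) := by
      exact (continuous_snd.tendsto ((0:ℝ),(1:ℝ))).comp hlim
    simpa [hvdef] using h2.sub_const 1
  clear_value v
  obtain ⟨N, hN⟩ : ∃ N : ℝ, ∀ τ ≥ N, |v τ| ≤ 1/6 := by
    have := hvlim (Metric.closedBall_mem_nhds (0:ℝ) (by norm_num : (0:ℝ) < 1/6))
    rw [Filter.mem_map, mem_atTop_sets] at this
    obtain ⟨N, hN⟩ := this
    exact ⟨N, fun τ hτ => by simpa [Real.dist_eq] using hN τ hτ⟩
  set τ₁ : ℝ := max N (max τ₀ 0) with hτ₁def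
  have hτ₁τ₀ : τ₀ ≤ τ₁ := le_max_of_le_right (le_max_left _ _)
  have hτ₁0 : 0 ≤ τ₁ := le_max_of_le_right (le_max_right _ _)
  have hNτ₁ : N ≤ τ₁ := le_max_left _ _
  clear_value τ₁
  have hIci : Ici τ₁ ⊆ Ici τ₀ := Ici_subset_Ici.mpr hτ₁τ₀
  have h16 : ∀ τ ∈ Ici τ₁, |v τ| ≤ 1/6 := fun τ hτ => hN τ (le_trans hNτ₁ hτ)
  -- Step 2 : energy decay
  set A2 : ℝ := Real.exp ((5/6)*τ₁) * ((z₂ τ₁)^2 + (v τ₁)^2) with hA2def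
  clear_value A2
  have hA2nn : 0 ≤ A2 := by rw [hA2def]; positivity
  have hE : ∀ τ ∈ Ici τ₁, Real.exp ((5/6)*τ) * ((z₂ τ)^2 + (v τ)^2) ≤ A2 := by
    simp only [hA2def]
    apply le_of_hasDerivAt_nonpos
      (f' := fun τ => Real.exp ((5/6)*τ) * ((5/6)*((z₂ τ)^2+(v τ)^2) +
        (2*z₂ τ*(2 * z₂ τ - 3 * z₂ τ * w₀ τ) + 2*v τ*(-(1/6) * z₂ τ - v τ - (v τ)^2))))
    · intro τ hτ
      have hτ0 : τ ∈ Ici τ₀ := hIci hτ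
      have h1 : HasDerivAt (fun t : ℝ => Real.exp ((5/6)*t)) (Real.exp ((5/6)*τ) * (5/6)) τ := by
        simpa using (((hasDerivAt_id τ).const_mul (5/6 : ℝ)).exp)
      have h2 : HasDerivAt (fun t => (z₂ t)^2) (2 * z₂ τ * (2 * z₂ τ - 3 * z₂ τ * w₀ τ)) τ := by
        have := (hz τ hτ0).pow 2
        refine this.congr_deriv ?_; push_cast; ring
      have h3 : HasDerivAt (fun t => (v t)^2) (2 * v τ * (-(1/6) * z₂ τ - v τ - (v τ)^2)) τ := by
        have := (hv τ hτ0).pow 2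
        refine this.congr_deriv ?_; push_cast; ring
      have := h1.mul (h2.add h3)
      refine this.congr_deriv ?_; simp only [Pi.add_apply]; ring
    · intro τ hτ
      have hb := abs_le.mp (h16 τ hτ)
      have hX : (5/6)*((z₂ τ)^2+(v τ)^2) +
          (2*z₂ τ*(2 * z₂ τ - 3 * z₂ τ * w₀ τ) + 2*v τ*(-(1/6) * z₂ τ - v τ - (v τ)^2)) ≤ 0 := by
        rw [hwv τ]
        nlinarith [mul_nonneg (sq_nonneg (z₂ τ)) (by linarith [hb.1] : (0:ℝ) ≤ 1/6 + v τ),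
          mul_nonneg (sq_nonneg (v τ)) (by linarith [hb.1] : (0:ℝ) ≤ 1/6 + v τ),
          sq_nonneg (z₂ τ + v τ), sq_nonneg (z₂ τ - v τ)]
      exact mul_nonpos_of_nonneg_of_nonpos (Real.exp_pos _).le hX

  -- extract pointwise bound on v from energy
  set A : ℝ := Real.sqrt A2 with hAdef
  clear_value A
  have hAnn : 0 ≤ A := by rw [hAdef]; exact Real.sqrt_nonneg _
  have hA2A : A2 = A^2 := by rw [hAdef]; exact (Real.sq_sqrt hA2nn).symm
  have hvb : ∀ τ ∈ Ici τ₁, |v τ| ≤ A * Real.exp (-(5/12)*τ) := by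
    intro τ hτ
    have h := hE τ hτ
    have he := Real.exp_pos ((5/6)*τ)
    have hv2 : (v τ)^2 ≤ A2 * Real.exp (-((5/6)*τ)) := by
      rw [Real.exp_neg, ← div_eq_mul_inv, le_div_iff₀ he]
      nlinarith [sq_nonneg (z₂ τ), he.le]
    apply abs_le_of_sq_le_sq'' (mul_nonneg hAnn (Real.exp_pos _).le)
    calc (v τ)^2 ≤ A2 * Real.exp (-((5/6)*τ)) := hv2
    _ = (A * Real.exp (-(5/12)*τ))^2 := by
        rw [hA2A, show (-((5/6)*τ)) = (-(5/12)*τ) + (-(5/12)*τ) by ring, Real.exp_add]; ring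
  -- Step 3 : sharp decay of z₂
  set B : ℝ := Real.exp (2*τ₁) * (z₂ τ₁)^2 * Real.exp ((72*A/5) * Real.exp (-(5/12)*τ₁)) with hBdef
  clear_value B
  have hBnn : 0 ≤ B := by rw [hBdef]; positivity
  have hφ : ∀ τ ∈ Ici τ₁,
      Real.exp (2*τ) * (z₂ τ)^2 * Real.exp ((72*A/5) * Real.exp (-(5/12)*τ)) ≤ B := by
    simp only [hBdef]
    apply le_of_hasDerivAt_nonpos
      (f' := fun τ => Real.exp (2*τ) * Real.exp ((72*A/5) * Real.exp (-(5/12)*τ)) *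
        ((z₂ τ)^2 * (-6 * v τ) + (z₂ τ)^2 * ((72*A/5) * Real.exp (-(5/12)*τ) * (-(5/12)))))
    · intro τ hτ
      have hτ0 : τ ∈ Ici τ₀ := hIci hτ
      have h1 : HasDerivAt (fun t : ℝ => Real.exp (2*t)) (Real.exp (2*τ) * 2) τ := by
        simpa using ((hasDerivAt_id τ).const_mul (2:ℝ)).exp
      have h2 : HasDerivAt (fun t => (z₂ t)^2) (2 * z₂ τ * (2 * z₂ τ - 3 * z₂ τ * w₀ τ)) τ := by
        have := (hz τ hτ0).pow 2
        refine this.congr_deriv ?_; push_cast; ring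
      have hi : HasDerivAt (fun t : ℝ => Real.exp (-(5/12)*t)) (Real.exp (-(5/12)*τ) * (-(5/12))) τ := by
        simpa using ((hasDerivAt_id τ).const_mul (-(5/12):ℝ)).exp
      have h3 : HasDerivAt (fun t : ℝ => Real.exp ((72*A/5) * Real.exp (-(5/12)*t)))
          (Real.exp ((72*A/5) * Real.exp (-(5/12)*τ)) * ((72*A/5) * (Real.exp (-(5/12)*τ) * (-(5/12))))) τ := by
        simpa [mul_comm, mul_assoc, mul_left_comm] using ((hi.const_mul (72*A/5)).exp)
      have := (h1.mul h2).mul h3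
      refine this.congr_deriv ?_
      simp only [hvdef, Pi.mul_apply]; ring
    · intro τ hτ
      have hvb' := (abs_le.mp (hvb τ hτ)).1
      have hX : (z₂ τ)^2 * (-6 * v τ) + (z₂ τ)^2 * ((72*A/5) * Real.exp (-(5/12)*τ) * (-(5/12))) ≤ 0 := by
        nlinarith [mul_nonneg (sq_nonneg (z₂ τ))
          (show 0 ≤ v τ + A * Real.exp (-(5/12)*τ) by linarith)]
      exact mul_nonpos_of_nonneg_of_nonpos (by positivity) hX
  have hψB : ∀ τ ∈ Ici τ₁, Real.exp (2*τ) * (z₂ τ)^2 ≤ B := by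
    intro τ hτ
    have h := hφ τ hτ
    have hge : (1:ℝ) ≤ Real.exp ((72*A/5) * Real.exp (-(5/12)*τ)) :=
      Real.one_le_exp (by positivity)
    have hXnn : 0 ≤ Real.exp (2*τ) * (z₂ τ)^2 :=
      mul_nonneg (Real.exp_pos (2*τ)).le (sq_nonneg (z₂ τ))
    have h2 := mul_le_mul_of_nonneg_left hge hXnn
    rw [mul_one] at h2
    linarith
  have hz2e : ∀ τ ∈ Ici τ₁, (z₂ τ)^2 ≤ B * Real.exp (-(2*τ)) := by
    intro τ hτ
    have hee : Real.exp (-(2*τ)) * Real.exp (2*τ) = 1 := by rw [← Real.exp_add]; simp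
    have h := mul_le_mul_of_nonneg_left (hψB τ hτ) (Real.exp_pos (-(2*τ))).le
    calc (z₂ τ)^2 = Real.exp (-(2*τ)) * (Real.exp (2*τ) * (z₂ τ)^2) := by
          rw [← mul_assoc, hee, one_mul]
    _ ≤ Real.exp (-(2*τ)) * B := h
    _ = B * Real.exp (-(2*τ)) := mul_comm _ _
  have hzb : ∀ τ ∈ Ici τ₁, |z₂ τ| ≤ Real.sqrt B * Real.exp (-τ) := by
    intro τ hτ
    apply abs_le_of_sq_le_sq'' (by positivity)
    calc (z₂ τ)^2 ≤ B * Real.exp (-(2*τ)) := hz2e τ hτ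
    _ = (Real.sqrt B * Real.exp (-τ))^2 := by
        rw [mul_pow, Real.sq_sqrt hBnn, show (-(2*τ)) = (-τ) + (-τ) by ring, Real.exp_add, sq]
  -- Step 4 : improved decay of v
  set Dc : ℝ := Real.exp ((3/2)*τ₁) * (v τ₁)^2 + (B/3) * Real.exp (-(1/2)*τ₁) with hDdef
  clear_value Dc
  have hDnn : 0 ≤ Dc := by
    rw [hDdef]
    have h1 : 0 ≤ Real.exp ((3/2)*τ₁) * (v τ₁)^2 := by positivity
    have h2 : 0 ≤ B/3 * Real.exp (-(1/2)*τ₁) :=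
      mul_nonneg (by linarith) (Real.exp_pos _).le
    linarith
  have hlam : ∀ τ ∈ Ici τ₁,
      Real.exp ((3/2)*τ) * (v τ)^2 + (B/3) * Real.exp (-(1/2)*τ) ≤ Dc := by
    simp only [hDdef]
    apply le_of_hasDerivAt_nonpos
      (f' := fun τ => Real.exp ((3/2)*τ) *
        ((3/2)*(v τ)^2 + 2 * v τ * (-(1/6) * z₂ τ - v τ - (v τ)^2)) +
        (B/3) * (Real.exp (-(1/2)*τ) * (-(1/2))))
    · intro τ hτ
      have hτ0 : τ ∈ Ici τ₀ := hIci hτ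
      have h1 : HasDerivAt (fun t : ℝ => Real.exp ((3/2)*t)) (Real.exp ((3/2)*τ) * (3/2)) τ := by
        simpa using ((hasDerivAt_id τ).const_mul ((3:ℝ)/2)).exp
      have h3 : HasDerivAt (fun t => (v t)^2) (2 * v τ * (-(1/6) * z₂ τ - v τ - (v τ)^2)) τ := by
        have := (hv τ hτ0).pow 2
        refine this.congr_deriv ?_; push_cast; ring
      have hi : HasDerivAt (fun t : ℝ => Real.exp (-(1/2)*t)) (Real.exp (-(1/2)*τ) * (-(1/2))) τ := by
        simpa using ((hasDerivAt_id τ).const_mul (-(1/2):ℝ)).exp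
      have := (h1.mul h3).add (hi.const_mul (B/3))
      refine this.congr_deriv ?_; ring
    · intro τ hτ
      have hb := abs_le.mp (h16 τ hτ)
      have hz2 := hz2e τ hτ
      have key : (3/2)*(v τ)^2 + 2 * v τ * (-(1/6) * z₂ τ - v τ - (v τ)^2) ≤
          (B/6) * Real.exp (-(2*τ)) := by
        nlinarith [mul_nonneg (sq_nonneg (v τ)) (show 0 ≤ 1/6 + v τ by linarith),
          sq_nonneg (z₂ τ + v τ), hz2, hb.1, hb.2]
      have hm : Real.exp ((3/2)*τ) * Real.exp (-(2*τ)) = Real.exp (-(1/2)*τ) := by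
        rw [← Real.exp_add]; ring_nf
      nlinarith [mul_le_mul_of_nonneg_left key (Real.exp_pos ((3/2)*τ)).le, hm]
  have hv2e : ∀ τ ∈ Ici τ₁, Real.exp τ * (v τ)^2 ≤ Dc := by
    intro τ hτ
    have h := hlam τ hτ
    have hpos : 0 ≤ (B/3) * Real.exp (-(1/2)*τ) :=
      mul_nonneg (by linarith) (Real.exp_pos _).le
    have h1 : Real.exp ((3/2)*τ) * (v τ)^2 ≤ Dc := by linarith
    have hτnn : (0:ℝ) ≤ τ := le_trans hτ₁0 hτ
    have hle : Real.exp τ ≤ Real.exp ((3/2)*τ) := Real.exp_le_exp.mpr (by linarith)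
    calc Real.exp τ * (v τ)^2 ≤ Real.exp ((3/2)*τ) * (v τ)^2 :=
          mul_le_mul_of_nonneg_right hle (sq_nonneg _)
    _ ≤ Dc := h1
  -- Step 5 : the function e^τ v has derivative bounded by a constant
  set M : ℝ := Real.sqrt B / 6 + Dc with hMdef
  clear_value M
  have hMnn : 0 ≤ M := by
    rw [hMdef]; have := Real.sqrt_nonneg B; linarith
  have hφ2d : ∀ τ ∈ Ici τ₁,
      HasDerivAt (fun t => Real.exp t * v t) (Real.exp τ * (-(1/6) * z₂ τ - (v τ)^2)) τ := by
    intro τ hτ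
    have := (Real.hasDerivAt_exp τ).mul (hv τ (hIci hτ))
    refine this.congr_deriv ?_; ring
  have hφ2b : ∀ τ ∈ Ici τ₁, |Real.exp τ * (-(1/6) * z₂ τ - (v τ)^2)| ≤ M := by
    intro τ hτ
    have hz' := abs_le.mp (hzb τ hτ)
    have hone : Real.exp τ * Real.exp (-τ) = 1 := by rw [← Real.exp_add]; simp
    have hup : Real.exp τ * z₂ τ ≤ Real.sqrt B := by
      have := mul_le_mul_of_nonneg_left hz'.2 (Real.exp_pos τ).le
      calc Real.exp τ * z₂ τ ≤ Real.exp τ * (Real.sqrt B * Real.exp (-τ)) := this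
      _ = Real.sqrt B * (Real.exp τ * Real.exp (-τ)) := by ring
      _ = Real.sqrt B := by rw [hone, mul_one]
    have hlo : -Real.sqrt B ≤ Real.exp τ * z₂ τ := by
      have := mul_le_mul_of_nonneg_left hz'.1 (Real.exp_pos τ).le
      calc -Real.sqrt B = Real.sqrt B * -(Real.exp τ * Real.exp (-τ)) := by rw [hone]; ring
      _ = Real.exp τ * (-(Real.sqrt B * Real.exp (-τ))) := by ring
      _ ≤ Real.exp τ * z₂ τ := this
    have hvv := hv2e τ hτ
    have hvvnn : 0 ≤ Real.exp τ * (v τ)^2 := by positivity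
    rw [abs_le, hMdef]
    constructor <;> nlinarith [hDnn, Real.sqrt_nonneg B]
  have hgrow : ∀ τ ≥ τ₁, |Real.exp τ * v τ| ≤ |Real.exp τ₁ * v τ₁| + M * (τ - τ₁) := by
    intro τ hτ
    have hsub : Icc τ₁ τ ⊆ Ici τ₁ := fun x hx => hx.1
    have hmvt := Convex.norm_image_sub_le_of_norm_hasDerivWithin_le
      (f := fun t => Real.exp t * v t)
      (f' := fun t => Real.exp t * (-(1/6) * z₂ t - (v t)^2))
      (fun x hx => (hφ2d x (hsub hx)).hasDerivWithinAt)
      (fun x hx => by rw [Real.norm_eq_abs]; exact hφ2b x (hsub hx))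
      (convex_Icc τ₁ τ) (left_mem_Icc.mpr hτ) (right_mem_Icc.mpr hτ)
    rw [Real.norm_eq_abs, Real.norm_eq_abs, abs_of_nonneg (sub_nonneg.mpr hτ)] at hmvt
    have htri : |Real.exp τ * v τ| - |Real.exp τ₁ * v τ₁| ≤
        |Real.exp τ * v τ - Real.exp τ₁ * v τ₁| := abs_sub_abs_le_abs_sub _ _
    linarith
  -- conclusion
  set P : ℝ := |Real.exp τ₁ * v τ₁| with hPdef
  clear_value P
  have hPnn : 0 ≤ P := hPdef ▸ abs_nonneg _
  refine ⟨Real.sqrt B + P + M + 1,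
    by have := Real.sqrt_nonneg B; linarith, τ₁, hτ₁τ₀, fun τ hτ => ⟨?_, ?_⟩⟩
  · have h := hzb τ hτ
    have : Real.sqrt B * Real.exp (-τ) ≤ (Real.sqrt B + P + M + 1) * Real.exp (-τ) := by
      apply mul_le_mul_of_nonneg_right _ (Real.exp_pos (-τ)).le
      linarith
    linarith
  · have hτnn : (0:ℝ) ≤ τ := le_trans hτ₁0 hτ
    have hvw : w₀ τ - 1 = v τ := by rw [hwv τ]; ring
    have hval : v τ = Real.exp (-τ) * (Real.exp τ * v τ) := by
      rw [← mul_assoc, ← Real.exp_add]; simp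
    have habs : |w₀ τ - 1| = Real.exp (-τ) * |Real.exp τ * v τ| := by
      rw [hvw, hval, abs_mul, abs_of_pos (Real.exp_pos (-τ))]
      rw [← hval]
    have hg := hgrow τ hτ
    have hQ : P + M * (τ - τ₁) ≤ (Real.sqrt B + P + M + 1) * (1 + τ) := by
      nlinarith [mul_nonneg hMnn hτ₁0, mul_nonneg hPnn hτnn, Real.sqrt_nonneg B,
        mul_nonneg (Real.sqrt_nonneg B) hτnn, mul_nonneg hMnn hτnn, hPnn, hMnn, hτnn, hτ₁0]
    calc |w₀ τ - 1| = Real.exp (-τ) * |Real.exp τ * v τ| := habs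
    _ ≤ Real.exp (-τ) * (P + M * (τ - τ₁)) :=
        mul_le_mul_of_nonneg_left (by linarith) (Real.exp_pos (-τ)).le
    _ ≤ Real.exp (-τ) * ((Real.sqrt B + P + M + 1) * (1 + τ)) :=
        mul_le_mul_of_nonneg_left hQ (Real.exp_pos (-τ)).le
    _ = (Real.sqrt B + P + M + 1) * (1 + τ) * Real.exp (-τ) := by ring
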